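/- Let R be a finite set, let c assign to each unordered pair of distinct elements of R a value in ZMod p, let C : R → ZMod p be a vertex coloring, and let k' ≥ 0 be an integer such that every x ∈ R satisfies |{w ∈ R∖{x} : c({x,w}) ≠ C(x)}| ≤ k'. Suppose R is partitioned as R = D ⊔ D' with |D| ≥ |D'| and C(x) ≠ C(x') for every x ∈ D and x' ∈ D'. Then |D'| ≤ 2k'. -/

import Mathlib

theorem stmt_11 {R : Type*} [Fintype R] [DecidableEq R]
    (p : ℕ) (c : Sym2 R → ZMod p) (C : R → ZMod p) (k' : ℕ)
    (hreg : ∀ x : R,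
      (Finset.univ.filter fun w => w ≠ x ∧ c s(x, w) ≠ C x).card ≤ k')
    (D D' : Finset R) (hunion : D ∪ D' = Finset.univ) (hdisj : Disjoint D D')
    (hcard : D'.card ≤ D.card)
    (hdiff : ∀ x ∈ D, ∀ x' ∈ D', C x ≠ C x') :
    D'.card ≤ 2 * k' := by
  classical
  set A := (D ×ˢ D').filter (fun q => c s(q.1, q.2) ≠ C q.1) with hA
  set B := (D ×ˢ D').filter (fun q => c s(q.1, q.2) ≠ C q.2) with hB
  have hcover : D ×ˢ D' ⊆ A ∪ B := by
    intro q hq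
    simp only [Finset.mem_product] at hq
    by_cases h1 : c s(q.1, q.2) = C q.1
    · refine Finset.mem_union_right _ (Finset.mem_filter.2 ⟨Finset.mem_product.2 hq, ?_⟩)
      rw [h1]; exact hdiff _ hq.1 _ hq.2
    · exact Finset.mem_union_left _ (Finset.mem_filter.2 ⟨Finset.mem_product.2 hq, h1⟩)
  have hne : ∀ q : R × R, q.1 ∈ D → q.2 ∈ D' → q.2 ≠ q.1 := by
    intro q h1 h2 h
    exact Finset.disjoint_left.1 hdisj h1 (h ▸ h2)
  have hAcard : A.card ≤ D.card * k' := by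
    rw [Finset.card_eq_sum_card_fiberwise (f := Prod.fst) (t := D)
      (fun q hq => (Finset.mem_product.1 (Finset.mem_filter.1 hq).1).1)]
    rw [← Finset.sum_const_nat (m := k') (fun x _ => rfl) (s := D)] at *
    refine Finset.sum_le_sum fun x hx => ?_
    calc (A.filter fun q => q.1 = x).card
        ≤ (Finset.univ.filter fun w => w ≠ x ∧ c s(x, w) ≠ C x).card := by
          apply Finset.card_le_card_of_injOn (fun q => q.2)
          · intro q hq
            replace hq : q ∈ (A.filter fun q => q.1 = x) := hq
            simp only [hA, hB, Finset.mem_coe, Finset.mem_filter, Finset.mem_product] at hq ⊢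
            obtain ⟨⟨⟨hq1, hq2⟩, hcq⟩, hqx⟩ := hq
            subst hqx
            exact ⟨Finset.mem_univ _, hne q hq1 hq2, hcq⟩
          · intro q hq q' hq' h
            simp only [Finset.mem_coe, Finset.mem_filter] at hq hq'
            exact Prod.ext (hq.2.trans hq'.2.symm) h
      _ ≤ k' := hreg x
  have hBcard : B.card ≤ D'.card * k' := by
    rw [Finset.card_eq_sum_card_fiberwise (f := Prod.snd) (t := D')
      (fun q hq => (Finset.mem_product.1 (Finset.mem_filter.1 hq).1).2)]
    rw [← Finset.sum_const_nat (m := k') (fun x _ => rfl) (s := D')] at *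
    refine Finset.sum_le_sum fun x hx => ?_
    calc (B.filter fun q => q.2 = x).card
        ≤ (Finset.univ.filter fun w => w ≠ x ∧ c s(x, w) ≠ C x).card := by
          apply Finset.card_le_card_of_injOn (fun q => q.1)
          · intro q hq
            replace hq : q ∈ (B.filter fun q => q.2 = x) := hq
            simp only [hA, hB, Finset.mem_coe, Finset.mem_filter, Finset.mem_product] at hq ⊢
            obtain ⟨⟨⟨hq1, hq2⟩, hcq⟩, hqx⟩ := hq
            subst hqx
            refine ⟨Finset.mem_univ _, (hne q hq1 hq2).symm, ?_⟩
            rwa [Sym2.eq_swap]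
          · intro q hq q' hq' h
            simp only [Finset.mem_coe, Finset.mem_filter] at hq hq'
            exact Prod.ext h (hq.2.trans hq'.2.symm)
      _ ≤ k' := hreg x
  have hkey : D.card * D'.card ≤ D.card * (2 * k') := by
    calc D.card * D'.card = (D ×ˢ D').card := (Finset.card_product D D').symm
      _ ≤ (A ∪ B).card := Finset.card_le_card hcover
      _ ≤ A.card + B.card := Finset.card_union_le _ _
      _ ≤ D.card * k' + D'.card * k' := Nat.add_le_add hAcard hBcard
      _ ≤ D.card * k' + D.card * k' := by
          exact Nat.add_le_add_left (Nat.mul_le_mul_right _ hcard) _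
      _ = D.card * (2 * k') := by ring
  rcases Nat.eq_zero_or_pos D.card with h0 | hpos
  · omega
  · exact Nat.le_of_mul_le_mul_left hkey hpos
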